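/- Let (A, B) be a suitable pair of sequences of positive integers, A = (a_1, …, a_p), B = (b_1, …, b_p), with compound sequence C(A,B) = (n_0, …, n_p). Then gcd(n_0, …, n_p) = 1, so ⟨n_0, …, n_p⟩ is a numerical semigroup. If moreover a_i ≥ 2 and b_i ≥ 2 for all i, then (n_0, …, n_p) is a minimal generating sequence for this numerical semigroup (no proper subsequence generates it). -/

import Mathlib

/-- The monoid `⟨t_0, …, t_{n-1}⟩` of all nonnegative integer linear combinations of
the first `n` terms of the sequence `t`. -/
def genBy (t : ℕ → ℕ) (n : ℕ) : Set ℕ :=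
  {s | ∃ x : ℕ → ℕ, s = ∑ i ∈ Finset.range n, x i * t i}

/-- `d_i = gcd(t_0, …, t_i)`. -/
def seqD (t : ℕ → ℕ) (i : ℕ) : ℕ := Finset.gcd (Finset.range (i + 1)) t

/-- `c_j = d_{j-1} / d_j` (for `j ≥ 1`). -/
def seqC (t : ℕ → ℕ) (j : ℕ) : ℕ := seqD t (j - 1) / seqD t j

/-- The sequence `(t_0, …, t_k)` of positive integers is telescopic if
`c_j · t_j ∈ ⟨t_0, …, t_{j-1}⟩` for every `j = 1, …, k`. -/
def IsTelescopic (t : ℕ → ℕ) (k : ℕ) : Prop :=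
  (∀ i ≤ k, 0 < t i) ∧ ∀ j, 1 ≤ j → j ≤ k → seqC t j * t j ∈ genBy t j

/-- The monoid of all nonnegative integer linear combinations of the terms `t i`
for `i` ranging over the finite index set `J` (a "subsequence"). -/
def genByIdx (t : ℕ → ℕ) (J : Finset ℕ) : Set ℕ :=
  {s | ∃ x : ℕ → ℕ, s = ∑ i ∈ J, x i * t i}

/-- `S` is a numerical semigroup: an additive submonoid of `ℕ` with finite complement. -/
def IsNumericalSemigroup (S : Set ℕ) : Prop :=
  0 ∈ S ∧ (∀ a ∈ S, ∀ b ∈ S, a + b ∈ S) ∧ Sᶜ.Finite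

/-- `(A, B)` (with terms indexed `1, …, p`) is a suitable pair of sequences of positive
integers: `gcd (A i) (B j) = 1` for all `j ≤ i`. -/
def IsSuitablePair (A B : ℕ → ℕ) (p : ℕ) : Prop :=
  (∀ i, 1 ≤ i → i ≤ p → 0 < A i ∧ 0 < B i) ∧
    ∀ i j, 1 ≤ j → j ≤ i → i ≤ p → Nat.gcd (A i) (B j) = 1

/-- The compound sequence `C(A,B) = (n_0, …, n_p)`: `n_i = b_1 ⋯ b_i · a_{i+1} ⋯ a_p`
(equivalently `n_0 = a_1 ⋯ a_p` and `n_i = n_{i-1} b_i / a_i`). -/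
def compoundSeq (A B : ℕ → ℕ) (p : ℕ) (i : ℕ) : ℕ :=
  (∏ j ∈ Finset.Icc 1 i, B j) * ∏ j ∈ Finset.Icc (i + 1) p, A j

open Finset


lemma genBy_zero_mem (t : ℕ → ℕ) (n : ℕ) : 0 ∈ genBy t n :=
  ⟨0, by simp⟩

lemma genBy_add {t : ℕ → ℕ} {n a b : ℕ} (ha : a ∈ genBy t n) (hb : b ∈ genBy t n) :
    a + b ∈ genBy t n := by
  obtain ⟨x, hx⟩ := ha
  obtain ⟨y, hy⟩ := hb
  exact ⟨fun i => x i + y i, by simp [hx, hy, add_mul, Finset.sum_add_distrib]⟩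

lemma genBy_smul {t : ℕ → ℕ} {n a : ℕ} (k : ℕ) (ha : a ∈ genBy t n) :
    k * a ∈ genBy t n := by
  obtain ⟨x, hx⟩ := ha
  refine ⟨fun i => k * x i, ?_⟩
  simp [hx, Finset.mul_sum, mul_assoc]

lemma genBy_gen {t : ℕ → ℕ} {n i : ℕ} (hi : i < n) : t i ∈ genBy t n := by
  refine ⟨fun j => if j = i then 1 else 0, ?_⟩
  have h : ∀ j ∈ Finset.range n, (if j = i then 1 else 0) * t j
      = if j = i then t i else 0 := by
    intro j _
    by_cases hji : j = i <;> simp [hji]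
  rw [Finset.sum_congr rfl h, Finset.sum_ite_eq' (Finset.range n) i]
  simp [Finset.mem_range.mpr hi]

lemma nat_bezout (m n : ℕ) :
    ∃ u1 u2 v1 v2 : ℕ, u1 * m + u2 * n = Nat.gcd m n + (v1 * m + v2 * n) := by
  rcases Nat.eq_zero_or_pos m with hm | hm
  · exact ⟨0, 1, 0, 0, by simp [hm]⟩
  rcases Nat.eq_zero_or_pos n with hn | hn
  · exact ⟨1, 0, 0, 0, by simp [hn]⟩
  set a := Nat.gcdA m n with ha
  set b := Nat.gcdB m n with hb
  have key : (Nat.gcd m n : ℤ) = m * a + n * b := Nat.gcd_eq_gcd_ab m n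
  have h1 : (0 : ℤ) ≤ a + (a.natAbs : ℤ) * n := by
    have e1 : (a.natAbs : ℤ) * 1 ≤ (a.natAbs : ℤ) * n := by
      apply mul_le_mul_of_nonneg_left
      · exact_mod_cast hn
      · positivity
    have e2 : (0 : ℤ) ≤ a + (a.natAbs : ℤ) := by omega
    linarith
  have h2 : (0 : ℤ) ≤ b + (b.natAbs : ℤ) * m := by
    have e1 : (b.natAbs : ℤ) * 1 ≤ (b.natAbs : ℤ) * m := by
      apply mul_le_mul_of_nonneg_left
      · exact_mod_cast hm
      · positivity
    have e2 : (0 : ℤ) ≤ b + (b.natAbs : ℤ) := by omega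
    linarith
  refine ⟨(a + (a.natAbs : ℤ) * n).toNat, (b + (b.natAbs : ℤ) * m).toNat,
    a.natAbs * n, b.natAbs * m, ?_⟩
  have key2 : ((a + (a.natAbs : ℤ) * n).toNat : ℤ) * m + ((b + (b.natAbs : ℤ) * m).toNat : ℤ) * n
      = (Nat.gcd m n : ℤ) + (((a.natAbs * n : ℕ) : ℤ) * m + ((b.natAbs * m : ℕ) : ℤ) * n) := by
    rw [Int.toNat_of_nonneg h1, Int.toNat_of_nonneg h2, key]
    push_cast
    ring
  exact_mod_cast key2

lemma finset_bezout (t : ℕ → ℕ) (s : Finset ℕ) :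
    ∃ x y : ℕ → ℕ, ∑ i ∈ s, x i * t i = s.gcd t + ∑ i ∈ s, y i * t i := by
  induction s using Finset.induction_on with
  | empty => exact ⟨0, 0, by simp⟩
  | insert a s ha ih =>
    obtain ⟨x, y, h⟩ := ih
    obtain ⟨u1, u2, v1, v2, hb⟩ := nat_bezout (t a) (s.gcd t)
    refine ⟨fun i => if i = a then u1 else u2 * x i + v2 * y i,
            fun i => if i = a then v1 else v2 * x i + u2 * y i, ?_⟩
    rw [Finset.gcd_insert, Finset.sum_insert ha, Finset.sum_insert ha]
    simp only [if_pos rfl]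
    have c1 : ∑ i ∈ s, (if i = a then u1 else u2 * x i + v2 * y i) * t i
        = ∑ i ∈ s, (u2 * x i + v2 * y i) * t i :=
      Finset.sum_congr rfl fun i hi => by rw [if_neg (by rintro rfl; exact ha hi)]
    have c2 : ∑ i ∈ s, (if i = a then v1 else v2 * x i + u2 * y i) * t i
        = ∑ i ∈ s, (v2 * x i + u2 * y i) * t i :=
      Finset.sum_congr rfl fun i hi => by rw [if_neg (by rintro rfl; exact ha hi)]
    rw [c1, c2]
    have e1 : ∑ i ∈ s, (u2 * x i + v2 * y i) * t i
        = u2 * ∑ i ∈ s, x i * t i + v2 * ∑ i ∈ s, y i * t i := by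
      rw [Finset.mul_sum, Finset.mul_sum, ← Finset.sum_add_distrib]
      exact Finset.sum_congr rfl fun i _ => by ring
    have e2 : ∑ i ∈ s, (v2 * x i + u2 * y i) * t i
        = v2 * ∑ i ∈ s, x i * t i + u2 * ∑ i ∈ s, y i * t i := by
      rw [Finset.mul_sum, Finset.mul_sum, ← Finset.sum_add_distrib]
      exact Finset.sum_congr rfl fun i _ => by ring
    rw [e1, e2, h]
    have hg : gcd (t a) (s.gcd t) = Nat.gcd (t a) (s.gcd t) := rfl
    rw [hg]
    calc u1 * t a + (u2 * (s.gcd t + ∑ i ∈ s, y i * t i) + v2 * ∑ i ∈ s, y i * t i)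
        = (u1 * t a + u2 * s.gcd t) + (u2 + v2) * ∑ i ∈ s, y i * t i := by ring
      _ = (Nat.gcd (t a) (s.gcd t) + (v1 * t a + v2 * s.gcd t))
            + (u2 + v2) * ∑ i ∈ s, y i * t i := by rw [hb]
      _ = Nat.gcd (t a) (s.gcd t)
            + (v1 * t a + (v2 * (s.gcd t + ∑ i ∈ s, y i * t i) + u2 * ∑ i ∈ s, y i * t i)) := by
          ring

lemma compound_pos {A B : ℕ → ℕ} {p : ℕ} (hsuit : IsSuitablePair A B p)
    {i : ℕ} (hi : i ≤ p) : 0 < compoundSeq A B p i := by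
  unfold compoundSeq
  apply Nat.mul_pos
  · exact Finset.prod_pos fun j hj => (hsuit.1 j (mem_Icc.mp hj).1
      (le_trans (mem_Icc.mp hj).2 hi)).2
  · exact Finset.prod_pos fun j hj => (hsuit.1 j (by have := (mem_Icc.mp hj).1; omega)
      (mem_Icc.mp hj).2).1

lemma compound_gcd_aux {A B : ℕ → ℕ} {p : ℕ} (hsuit : IsSuitablePair A B p) :
    ∀ i, i ≤ p → Finset.gcd (Finset.range (i + 1)) (compoundSeq A B p)
      = ∏ j ∈ Finset.Icc (i + 1) p, A j := by
  intro i
  induction i with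
  | zero =>
    intro _
    simp [compoundSeq, Finset.range_one, Finset.Icc_eq_empty (by omega : ¬ (1:ℕ) ≤ 0)]
  | succ i ih =>
    intro hip
    have ih' := ih (by omega)
    rw [Finset.range_add_one, Finset.gcd_insert, ih']
    have hsplit : Finset.Icc (i + 1) p = insert (i + 1) (Finset.Icc (i + 2) p) := by
      ext j; simp only [mem_Icc, mem_insert]; omega
    have hnot : i + 1 ∉ Finset.Icc (i + 2) p := by simp
    rw [hsplit, Finset.prod_insert hnot]
    have hg : gcd (compoundSeq A B p (i + 1))
        (A (i + 1) * ∏ j ∈ Finset.Icc (i + 2) p, A j)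
        = Nat.gcd ((∏ j ∈ Finset.Icc 1 (i + 1), B j) * ∏ j ∈ Finset.Icc (i + 2) p, A j)
          (A (i + 1) * ∏ j ∈ Finset.Icc (i + 2) p, A j) := rfl
    rw [hg, Nat.gcd_mul_right]
    have hcop : Nat.Coprime (∏ j ∈ Finset.Icc 1 (i + 1), B j) (A (i + 1)) :=
      Nat.Coprime.prod_left fun j hj =>
        Nat.Coprime.symm (hsuit.2 (i + 1) j (mem_Icc.mp hj).1 (mem_Icc.mp hj).2 hip)
    rw [hcop]
    simp

/-- For `(A, B)` a suitable pair with compound sequence `C(A,B) = (n_0, …, n_p)`: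
`gcd(n_0, …, n_p) = 1`, so `⟨n_0, …, n_p⟩` is a numerical semigroup; and if moreover
`a_i ≥ 2` and `b_i ≥ 2` for all `i`, then `(n_0, …, n_p)` is a minimal generating
sequence (no proper subsequence generates the semigroup). -/
theorem compound_gcd_and_minimal (A B : ℕ → ℕ) (p : ℕ)
    (hsuit : IsSuitablePair A B p) :
    Finset.gcd (Finset.range (p + 1)) (compoundSeq A B p) = 1 ∧
      IsNumericalSemigroup (genBy (compoundSeq A B p) (p + 1)) ∧
      ((∀ i, 1 ≤ i → i ≤ p → 2 ≤ A i ∧ 2 ≤ B i) →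
        ∀ J : Finset ℕ, J ⊂ Finset.range (p + 1) →
          genByIdx (compoundSeq A B p) J ≠ genBy (compoundSeq A B p) (p + 1)) := by
  set nn := compoundSeq A B p with hnn
  have hgcd1 : Finset.gcd (Finset.range (p + 1)) nn = 1 := by
    have := compound_gcd_aux hsuit p le_rfl
    rwa [Finset.Icc_eq_empty (by omega : ¬ p + 1 ≤ p), Finset.prod_empty] at this
  refine ⟨hgcd1, ?_, ?_⟩
  · -- numerical semigroup
    refine ⟨genBy_zero_mem nn (p + 1), fun a ha b hb => genBy_add ha hb, ?_⟩
    obtain ⟨x, y, hxy⟩ := finset_bezout nn (Finset.range (p + 1))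
    rw [hgcd1] at hxy
    set v := ∑ i ∈ Finset.range (p + 1), y i * nn i with hv
    have hvmem : v ∈ genBy nn (p + 1) := ⟨y, rfl⟩
    have hv1mem : v + 1 ∈ genBy nn (p + 1) := ⟨x, by omega⟩
    have key : ∀ N, v * v ≤ N → N ∈ genBy nn (p + 1) := by
      intro N hN
      rcases Nat.eq_zero_or_pos v with hv0 | hv0
      · have := genBy_smul N hv1mem
        rw [hv0] at this
        simpa using this
      · set q := N / v with hq
        set r := N % v with hrr
        have hr : r < v := Nat.mod_lt _ hv0
        have hvq : v ≤ q := (Nat.le_div_iff_mul_le hv0).mpr hN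
        obtain ⟨d, hd⟩ : ∃ d, q = r + d := ⟨q - r, by omega⟩
        have h0 : N = v * q + r := (Nat.div_add_mod N v).symm
        have hrep : N = d * v + r * (v + 1) := by rw [h0, hd]; ring
        rw [hrep]
        exact genBy_add (genBy_smul d hvmem) (genBy_smul r hv1mem)
    apply Set.Finite.subset (Set.finite_Iio (v * v))
    intro m hm
    by_contra hlt
    exact hm (key m (by simpa using hlt))
  · -- minimality
    intro hge2 J hJ heq
    obtain ⟨k, hkmem, hknot⟩ := Finset.exists_of_ssubset hJ
    have hkp : k ≤ p := by have := Finset.mem_range.mp hkmem; omega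
    have hnk_mem : nn k ∈ genBy nn (p + 1) := genBy_gen (by omega)
    rw [← heq] at hnk_mem
    obtain ⟨x, hx⟩ := hnk_mem
    set P := ∏ j ∈ Finset.Icc (k + 1) p, A j with hP
    set Q := ∏ j ∈ Finset.Icc 1 k, B j with hQ
    have hnkQP : nn k = Q * P := rfl
    have hPpos : 0 < P := Finset.prod_pos fun j hj =>
      (hsuit.1 j (by have := (mem_Icc.mp hj).1; omega) (mem_Icc.mp hj).2).1
    have hQpos : 0 < Q := Finset.prod_pos fun j hj =>
      (hsuit.1 j (mem_Icc.mp hj).1 (le_trans (mem_Icc.mp hj).2 hkp)).2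
    rw [← Finset.sum_filter_add_sum_filter_not J (fun i => i < k) (fun i => x i * nn i)] at hx
    set L := ∑ i ∈ J.filter (fun i => i < k), x i * nn i with hL
    set R := ∑ i ∈ J.filter (fun i => ¬ i < k), x i * nn i with hR
    have hLdvd : A k * P ∣ L := by
      apply Finset.dvd_sum
      intro i hi
      obtain ⟨hiJ, hik⟩ := Finset.mem_filter.mp hi
      have hsplit : Finset.Icc k p = insert k (Finset.Icc (k + 1) p) := by
        ext j; simp only [mem_Icc, mem_insert]; omega
      have hnot : k ∉ Finset.Icc (k + 1) p := by simp
      have h1 : A k * P ∣ ∏ j ∈ Finset.Icc (i + 1) p, A j := by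
        rw [← Finset.prod_insert hnot, ← hsplit]
        exact Finset.prod_dvd_prod_of_subset _ _ A (fun j hj => by
          simp only [mem_Icc] at *; omega)
      have h2 : A k * P ∣ nn i := Dvd.dvd.mul_left h1 _
      exact Dvd.dvd.mul_left h2 _
    have hRdvd : Q * B (k + 1) ∣ R := by
      apply Finset.dvd_sum
      intro i hi
      obtain ⟨hiJ, hik⟩ := Finset.mem_filter.mp hi
      have hik' : k < i := by
        rcases Nat.lt_or_ge k i with h | h
        · exact h
        · exfalso; have : i = k := by omega
          exact hknot (this ▸ hiJ)
      have hip : i ≤ p := by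
        have := Finset.mem_range.mp (hJ.subset hiJ); omega
      have h1 : Q * B (k + 1) ∣ ∏ j ∈ Finset.Icc 1 i, B j := by
        rw [← Finset.prod_Icc_succ_top (by omega : 1 ≤ k + 1) B]
        exact Finset.prod_dvd_prod_of_subset _ _ B (fun j hj => by
          simp only [mem_Icc] at *; omega)
      have h2 : Q * B (k + 1) ∣ nn i := Dvd.dvd.mul_right h1 _
      exact Dvd.dvd.mul_left h2 _
    by_cases hR0 : R = 0
    · rcases Nat.eq_zero_or_pos k with hk0 | hk1
      · have hL0 : L = 0 := by
          rw [hL, Finset.filter_false_of_mem (fun i _ => by omega), Finset.sum_empty]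
        have hz : Q * P = 0 := by rw [← hnkQP, hx, hL0, hR0]
        rcases Nat.mul_eq_zero.mp hz with h | h <;> omega
      · have hdvd : A k * P ∣ Q * P := by
          rw [← hnkQP, hx, hR0, add_zero]; exact hLdvd
        have hAQ : A k ∣ Q := (Nat.mul_dvd_mul_iff_right hPpos).mp hdvd
        have hcop : Nat.Coprime (A k) Q :=
          Nat.Coprime.prod_right fun j hj =>
            hsuit.2 k j (mem_Icc.mp hj).1 (mem_Icc.mp hj).2 hkp
        have := hcop.eq_one_of_dvd hAQ
        have := (hge2 k hk1 hkp).1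
        omega
    · have hne : (J.filter (fun i => ¬ i < k)).Nonempty := by
        rw [Finset.nonempty_iff_ne_empty]
        intro h
        exact hR0 (by rw [hR, h, Finset.sum_empty])
      obtain ⟨i0, hi0⟩ := hne
      obtain ⟨hi0J, hi0k⟩ := Finset.mem_filter.mp hi0
      have hi0k' : k < i0 := by
        rcases Nat.lt_or_ge k i0 with h | h
        · exact h
        · exfalso; have : i0 = k := by omega
          exact hknot (this ▸ hi0J)
      have hkp' : k + 1 ≤ p := by
        have := Finset.mem_range.mp (hJ.subset hi0J); omega
      have hcopPQ : Nat.Coprime P Q :=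
        Nat.Coprime.prod_left fun m hm =>
          Nat.Coprime.prod_right fun j hj =>
            hsuit.2 m j (mem_Icc.mp hj).1
              (le_trans (mem_Icc.mp hj).2 (by have := (mem_Icc.mp hm).1; omega))
              (mem_Icc.mp hm).2
      have hcopPb : Nat.Coprime P (B (k + 1)) :=
        Nat.Coprime.prod_left fun m hm =>
          hsuit.2 m (k + 1) (by omega) (mem_Icc.mp hm).1 (mem_Icc.mp hm).2
      have hcop : Nat.Coprime P (Q * B (k + 1)) := hcopPQ.mul_right hcopPb
      have hPL : P ∣ L := dvd_trans (dvd_mul_left P (A k)) hLdvd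
      have hPLR : P ∣ L + R := by rw [← hx, hnkQP]; exact dvd_mul_left P Q
      have hPR : P ∣ R := (Nat.dvd_add_right hPL).mp hPLR
      obtain ⟨r, hr⟩ := hRdvd
      have hPr : P ∣ r := by
        apply Nat.Coprime.dvd_of_dvd_mul_right hcop
        rw [mul_comm r (Q * B (k + 1)), ← hr]; exact hPR
      have hrpos : 0 < r := by
        rcases Nat.eq_zero_or_pos r with h | h
        · exfalso; exact hR0 (by rw [hr, h, mul_zero])
        · exact h
      have hrP : P ≤ r := Nat.le_of_dvd hrpos hPr
      have hB2 : 2 ≤ B (k + 1) := (hge2 (k + 1) (by omega) hkp').2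
      have hlt : Q * P < R := by
        rw [hr]
        calc Q * P < Q * B (k + 1) * P := by nlinarith
          _ ≤ Q * B (k + 1) * r := Nat.mul_le_mul_left _ hrP
      have hx' : Q * P = L + R := by rw [← hnkQP, hx]
      omega
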